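/- arXiv:2508.20940 — 3 statements merged into one kernel-verified Lean document; each statement's English description precedes it below -/
import Mathlib

section
/- Let q be a prime power, t ≥ 1 and n ≥ 2 integers, and M = (𝔽_q^{n×n})^t. For every integer k ≥ 0, the ball volume satisfies the congruence V_k ≡ 1 + Σ_{i=1}^{k} (−1)^i · binom(t, i) (mod q), as an identity of integers modulo q (binom denotes the ordinary binomial coefficient, with binom(t,i) = 0 for i > t). -/
open Matrix

/-- The sum-rank weight of a tuple of matrices. -/
noncomputable def sumRankW {F : Type} [Field F] {t n m : ℕ}
    (X : Fin t → Matrix (Fin n) (Fin m) F) : ℕ :=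
  ∑ i, (X i).rank

/-- The number of tuples of matrices of sum-rank weight at most `r`
(the volume of a sum-rank ball of radius `r`). -/
noncomputable def ballVol (F : Type) [Field F] [Fintype F] (t n m r : ℕ) : ℕ :=
  Nat.card {X : Fin t → Matrix (Fin n) (Fin m) F // sumRankW X ≤ r}

/-- `d` is the minimum sum-rank distance of the linear code `C`:
`d` is the least sum-rank weight of a nonzero codeword of `C`
(in particular `C` contains a nonzero element). -/
def IsMinDist {F : Type} [Field F] {t n : ℕ}
    (C : Submodule F (Fin t → Matrix (Fin n) (Fin n) F)) (d : ℕ) : Prop :=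
  IsLeast {w | ∃ x ∈ C, x ≠ 0 ∧ sumRankW x = w} d

/-- The linear code `C` with minimum distance `d` is perfect:
`|C| · V_{⌊(d-1)/2⌋} = |M|`. -/
def IsPerfect (F : Type) [Field F] [Fintype F] {t n : ℕ}
    (C : Submodule F (Fin t → Matrix (Fin n) (Fin n) F)) (d : ℕ) : Prop :=
  Nat.card C * ballVol F t n n ((d - 1) / 2) =
    Nat.card (Fin t → Matrix (Fin n) (Fin n) F)


open Finset
open scoped Classical

private lemma orbit_closed_dvd {F M : Type} [Field F] [Fintype F] [AddCommGroup M] [Module F M]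
    [Fintype M] [DecidableEq M] (v : M → M)
    (hv : ∀ (x : M) (c : F), v (x + c • v x) = v x) :
    ∀ (T : Finset M), (∀ x ∈ T, v x ≠ 0) → (∀ x ∈ T, ∀ c : F, x + c • v x ∈ T) →
      (Fintype.card F) ∣ T.card := by
  intro T
  generalize hN : T.card = N
  induction N using Nat.strong_induction_on generalizing T with
  | _ N ih =>
    intro h1 h2
    rcases T.eq_empty_or_nonempty with rfl | ⟨x, hx⟩
    · simp only [Finset.card_empty] at hN; exact hN ▸ dvd_zero _
    · subst hN
      set O : Finset M := Finset.image (fun c : F => x + c • v x) Finset.univ with hO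
      have hinj : Function.Injective (fun c : F => x + c • v x) := by
        intro a b hab
        simp only [add_right_inj] at hab
        have h3 : (a - b) • v x = 0 := by rw [sub_smul, hab, sub_self]
        rcases smul_eq_zero.mp h3 with h | h
        · exact sub_eq_zero.mp h
        · exact absurd h (h1 x hx)
      have hOcard : O.card = Fintype.card F := by
        rw [hO, Finset.card_image_of_injective _ hinj, Finset.card_univ]
      have hOsub : O ⊆ T := by
        intro y hy
        rw [hO, Finset.mem_image] at hy
        obtain ⟨c, -, rfl⟩ := hy
        exact h2 x hx c
      have hle : Fintype.card F ≤ T.card := hOcard ▸ Finset.card_le_card hOsub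
      have hTsplit : T.card = (T \ O).card + Fintype.card F := by
        rw [Finset.card_sdiff_of_subset hOsub, hOcard]
        omega
      have hxO : x ∈ O := by
        rw [hO, Finset.mem_image]
        exact ⟨0, Finset.mem_univ _, by simp⟩
      have hlt : (T \ O).card < T.card := by
        have : 0 < Fintype.card F := Fintype.card_pos
        omega
      have h1' : ∀ y ∈ T \ O, v y ≠ 0 := fun y hy => h1 y (Finset.mem_sdiff.mp hy).1
      have h2' : ∀ y ∈ T \ O, ∀ c : F, y + c • v y ∈ T \ O := by
        intro y hy c
        rw [Finset.mem_sdiff] at hy ⊢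
        refine ⟨h2 y hy.1 c, fun hmem => hy.2 ?_⟩
        rw [hO, Finset.mem_image] at hmem
        obtain ⟨d, -, hd⟩ := hmem
        -- hd : x + d • v x = y + c • v y
        have hvv : v y = v x := by
          have e1 := hv y c
          have e2 := hv x d
          rw [← hd] at e1
          exact e1.symm.trans e2
        rw [hO, Finset.mem_image]
        refine ⟨d - c, Finset.mem_univ _, ?_⟩
        have : y = x + d • v x - c • v y := by rw [hd]; abel
        rw [this, hvv, sub_smul]
        abel
      have hdvd := ih (T \ O).card hlt (T \ O) rfl h1' h2'
      rw [hTsplit]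
      exact Nat.dvd_add hdvd dvd_rfl

private lemma step_card {F M : Type} [Field F] [Fintype F] [AddCommGroup M] [Module F M]
    [Fintype M] (S : Set M) (v : M → M)
    (hv : ∀ (x : M) (c : F), v (x + c • v x) = v x)
    (hS : ∀ x ∈ S, ∀ c : F, x + c • v x ∈ S) :
    ((Nat.card S : ℕ) : ZMod (Fintype.card F)) =
      ((Nat.card {x : M // x ∈ S ∧ v x = 0} : ℕ) : ZMod (Fintype.card F)) := by
  classical
  have e1 : {x : M // x ∈ S} ≃ {x : M // x ∈ S ∧ v x = 0} ⊕ {x : M // x ∈ S ∧ ¬ v x = 0} := by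
    refine (Equiv.sumCompl (fun x : {x : M // x ∈ S} => v x.1 = 0)).symm.trans
      (Equiv.sumCongr ?_ ?_)
    · exact (Equiv.subtypeSubtypeEquivSubtypeInter (fun x : M => x ∈ S) (fun x => v x = 0))
    · exact (Equiv.subtypeSubtypeEquivSubtypeInter (fun x : M => x ∈ S) (fun x => ¬ v x = 0))
  have h0 : Nat.card S = Nat.card {x : M // x ∈ S ∧ v x = 0}
      + Nat.card {x : M // x ∈ S ∧ ¬ v x = 0} := by
    rw [Nat.card_congr e1, Nat.card_sum]
  have hdvd : (Fintype.card F) ∣ Nat.card {x : M // x ∈ S ∧ ¬ v x = 0} := by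
    rw [Nat.card_eq_fintype_card, Fintype.card_subtype]
    apply orbit_closed_dvd v hv
    · intro x hx
      simp only [Finset.mem_filter] at hx
      exact hx.2.2
    · intro x hx c
      simp only [Finset.mem_filter, Finset.mem_univ, true_and] at hx ⊢
      exact ⟨hS x hx.1 c, by rw [hv]; exact hx.2⟩
  rw [h0, Nat.cast_add, (ZMod.natCast_eq_zero_iff _ _).mpr hdvd, add_zero]

private def SZ (F : Type) [Field F] (t n k : ℕ) (R C : Finset (Fin n)) :
    Set (Fin t → Matrix (Fin n) (Fin n) F) :=
  {X | sumRankW X ≤ k ∧ ∀ i a b, (a ∈ R ∨ b ∈ C) → X i a b = 0}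

private lemma unip_det {F : Type} [Field F] {n : ℕ} (E : Matrix (Fin n) (Fin n) F)
    (hE : E * E = 0) (c : F) : IsUnit (1 + c • E).det := by
  have hcc : (c • E) * (c • E) = 0 := by
    rw [smul_mul_assoc, mul_smul_comm, hE, smul_zero, smul_zero]
  have h : (1 + c • E) * (1 - c • E) = 1 := by
    rw [mul_sub, mul_one, add_mul, one_mul, hcc, add_zero, add_sub_cancel_right]
  have h2 : (1 - c • E) * (1 + c • E) = 1 := mul_eq_one_comm.mp h
  exact (Matrix.isUnit_iff_isUnit_det _).mp ⟨⟨_, _, h, h2⟩, rfl⟩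

set_option maxHeartbeats 2000000 in
private lemma row_step {F : Type} [Field F] [Fintype F] {t n k : ℕ} [NeZero n]
    (R C : Finset (Fin n)) (h0 : (0 : Fin n) ∉ R) (j : Fin n) (hj : j ≠ 0) :
    ((Nat.card (SZ F t n k R C) : ℕ) : ZMod (Fintype.card F)) =
      ((Nat.card (SZ F t n k (insert j R) C) : ℕ) : ZMod (Fintype.card F)) := by
  classical
  set E : Matrix (Fin n) (Fin n) F := Matrix.single 0 j 1 with hEdef
  have hE : E * E = 0 := Matrix.single_mul_single_of_ne 1 0 j 0 hj 1
  set v : (Fin t → Matrix (Fin n) (Fin n) F) → (Fin t → Matrix (Fin n) (Fin n) F) :=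
    fun X i => E * X i with hvdef
  have happ : ∀ (X : Fin t → Matrix (Fin n) (Fin n) F) (c : F) (i),
      (X + c • v X) i = X i + c • (E * X i) := by
    intro X c i; simp [hvdef]
  have hv : ∀ (X : Fin t → Matrix (Fin n) (Fin n) F) (c : F), v (X + c • v X) = v X := by
    intro X c; funext i
    show E * ((X + c • v X) i) = E * X i
    rw [happ, mul_add, mul_smul_comm, ← mul_assoc, hE, zero_mul, smul_zero, add_zero]
  have key : ∀ (X : Fin t → Matrix (Fin n) (Fin n) F) (c : F) (i),
      X i + c • (E * X i) = (1 + c • E) * X i := by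
    intro X c i; rw [add_mul, one_mul, smul_mul_assoc]
  have hS : ∀ X ∈ SZ F t n k R C, ∀ c : F, X + c • v X ∈ SZ F t n k R C := by
    intro X hX c
    obtain ⟨hX1, hX2⟩ := hX
    constructor
    · have hr : ∀ i, ((X + c • v X) i).rank = (X i).rank := by
        intro i
        rw [happ, key, Matrix.rank_mul_eq_right_of_isUnit_det _ _ (unip_det E hE c)]
      calc sumRankW (X + c • v X) = sumRankW X :=
            Finset.sum_congr rfl (fun i _ => hr i)
        _ ≤ k := hX1
    · intro i a b hab
      rw [happ, Matrix.add_apply, Matrix.smul_apply]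
      rcases hab with ha | hb
      · have ha0 : a ≠ 0 := fun h => h0 (h ▸ ha)
        rw [hX2 i a b (Or.inl ha), Matrix.single_mul_apply_of_ne _ _ _ _ _ ha0,
          smul_zero, add_zero]
      · rw [hX2 i a b (Or.inr hb)]
        rcases eq_or_ne a 0 with rfl | ha0
        · rw [Matrix.single_mul_apply_same, hX2 i j b (Or.inr hb), mul_zero,
            smul_zero, add_zero]
        · rw [Matrix.single_mul_apply_of_ne _ _ _ _ _ ha0, smul_zero, add_zero]
  have := @step_card F (Fin t → Matrix (Fin n) (Fin n) F) _ _ _ _ _ (SZ F t n k R C) v hv hS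
  rw [this]
  congr 1
  apply Nat.card_congr
  apply Equiv.subtypeEquivRight
  intro X
  constructor
  · rintro ⟨⟨h1, h2⟩, h3⟩
    refine ⟨h1, fun i a b hab => ?_⟩
    rcases hab with ha | hb
    · rcases Finset.mem_insert.mp ha with rfl | ha'
      · have h3' : E * X i = 0 := congrFun h3 i
        have h4 : (E * X i) 0 b = 0 := by rw [h3']; simp
        rw [Matrix.single_mul_apply_same, one_mul] at h4
        exact h4
      · exact h2 i a b (Or.inl ha')
    · exact h2 i a b (Or.inr hb)
  · rintro ⟨h1, h2⟩
    refine ⟨⟨h1, fun i a b hab => h2 i a b (by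
      rcases hab with ha | hb
      · exact Or.inl (Finset.mem_insert_of_mem ha)
      · exact Or.inr hb)⟩, ?_⟩
    funext i
    ext a b
    show (E * X i) a b = 0
    rcases eq_or_ne a 0 with rfl | ha0
    · rw [Matrix.single_mul_apply_same, one_mul]
      exact h2 i j b (Or.inl (Finset.mem_insert_self _ _))
    · exact Matrix.single_mul_apply_of_ne 1 0 j a b ha0 (X i)

set_option maxHeartbeats 2000000 in
private lemma col_step {F : Type} [Field F] [Fintype F] {t n k : ℕ} [NeZero n]
    (R C : Finset (Fin n)) (h0 : (0 : Fin n) ∉ C) (j : Fin n) (hj : j ≠ 0) :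
    ((Nat.card (SZ F t n k R C) : ℕ) : ZMod (Fintype.card F)) =
      ((Nat.card (SZ F t n k R (insert j C)) : ℕ) : ZMod (Fintype.card F)) := by
  classical
  set E : Matrix (Fin n) (Fin n) F := Matrix.single j 0 1 with hEdef
  have hE : E * E = 0 := Matrix.single_mul_single_of_ne 1 j 0 j (Ne.symm hj) 1
  set v : (Fin t → Matrix (Fin n) (Fin n) F) → (Fin t → Matrix (Fin n) (Fin n) F) :=
    fun X i => X i * E with hvdef
  have happ : ∀ (X : Fin t → Matrix (Fin n) (Fin n) F) (c : F) (i),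
      (X + c • v X) i = X i + c • (X i * E) := by
    intro X c i; simp [hvdef]
  have hv : ∀ (X : Fin t → Matrix (Fin n) (Fin n) F) (c : F), v (X + c • v X) = v X := by
    intro X c; funext i
    show ((X + c • v X) i) * E = X i * E
    rw [happ, add_mul, smul_mul_assoc, mul_assoc, hE, mul_zero, smul_zero, add_zero]
  have key : ∀ (X : Fin t → Matrix (Fin n) (Fin n) F) (c : F) (i),
      X i + c • (X i * E) = X i * (1 + c • E) := by
    intro X c i; rw [mul_add, mul_one, mul_smul_comm]
  have hS : ∀ X ∈ SZ F t n k R C, ∀ c : F, X + c • v X ∈ SZ F t n k R C := by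
    intro X hX c
    obtain ⟨hX1, hX2⟩ := hX
    constructor
    · have hr : ∀ i, ((X + c • v X) i).rank = (X i).rank := by
        intro i
        rw [happ, key, Matrix.rank_mul_eq_left_of_isUnit_det _ _ (unip_det E hE c)]
      calc sumRankW (X + c • v X) = sumRankW X :=
            Finset.sum_congr rfl (fun i _ => hr i)
        _ ≤ k := hX1
    · intro i a b hab
      rw [happ, Matrix.add_apply, Matrix.smul_apply]
      rcases hab with ha | hb
      · rw [hX2 i a b (Or.inl ha)]
        rcases eq_or_ne b 0 with rfl | hb0
        · rw [Matrix.mul_single_apply_same, hX2 i a j (Or.inl ha), zero_mul,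
            smul_zero, add_zero]
        · rw [Matrix.mul_single_apply_of_ne _ _ _ _ _ hb0, smul_zero, add_zero]
      · have hb0 : b ≠ 0 := fun h => h0 (h ▸ hb)
        rw [hX2 i a b (Or.inr hb), Matrix.mul_single_apply_of_ne _ _ _ _ _ hb0,
          smul_zero, add_zero]
  have := @step_card F (Fin t → Matrix (Fin n) (Fin n) F) _ _ _ _ _ (SZ F t n k R C) v hv hS
  rw [this]
  congr 1
  apply Nat.card_congr
  apply Equiv.subtypeEquivRight
  intro X
  constructor
  · rintro ⟨⟨h1, h2⟩, h3⟩
    refine ⟨h1, fun i a b hab => ?_⟩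
    rcases hab with ha | hb
    · exact h2 i a b (Or.inl ha)
    · rcases Finset.mem_insert.mp hb with rfl | hb'
      · have h3' : X i * E = 0 := congrFun h3 i
        have h4 : (X i * E) a 0 = 0 := by rw [h3']; simp
        rw [Matrix.mul_single_apply_same, mul_one] at h4
        exact h4
      · exact h2 i a b (Or.inr hb')
  · rintro ⟨h1, h2⟩
    refine ⟨⟨h1, fun i a b hab => h2 i a b (by
      rcases hab with ha | hb
      · exact Or.inl ha
      · exact Or.inr (Finset.mem_insert_of_mem hb))⟩, ?_⟩
    funext i
    ext a b
    show (X i * E) a b = 0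
    rcases eq_or_ne b 0 with rfl | hb0
    · rw [Matrix.mul_single_apply_same, mul_one]
      exact h2 i a j (Or.inr (Finset.mem_insert_self _ _))
    · exact Matrix.mul_single_apply_of_ne 1 j 0 a b hb0 (X i)

private lemma single_entry_rep {F : Type} [Field F] {n : ℕ} [NeZero n]
    (A : Matrix (Fin n) (Fin n) F) (h : ∀ a b : Fin n, ¬(a = 0 ∧ b = 0) → A a b = 0) :
    A = Matrix.single 0 0 (A 0 0) := by
  ext a b
  rcases eq_or_ne a 0 with rfl | ha
  · rcases eq_or_ne b 0 with rfl | hb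
    · rw [Matrix.single_apply_same]
    · rw [h _ _ (by tauto), Matrix.single_apply_of_ne 0 0 _ 0 b (by tauto)]
  · rw [h _ _ (by tauto), Matrix.single_apply_of_ne 0 0 _ a b (by tauto)]

private lemma rank_single_entry {F : Type} [Field F] {n : ℕ} [NeZero n]
    (A : Matrix (Fin n) (Fin n) F) (h : ∀ a b : Fin n, ¬(a = 0 ∧ b = 0) → A a b = 0) :
    A.rank = if A 0 0 = 0 then 0 else 1 := by
  classical
  split_ifs with h0
  · rw [single_entry_rep A h, h0, Matrix.single_zero, Matrix.rank_zero]
  · conv_lhs => rw [single_entry_rep A h]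
    set c := A 0 0 with hc
    have hr : LinearMap.range (Matrix.mulVecLin (Matrix.single (0:Fin n) (0:Fin n) c)) =
        Submodule.span F {Pi.single (0:Fin n) c} := by
      apply le_antisymm
      · rintro y ⟨w, rfl⟩
        apply Submodule.mem_span_singleton.mpr
        refine ⟨w 0, ?_⟩
        rw [Matrix.mulVecLin_apply, Matrix.single_mulVec]
        ext i
        rcases eq_or_ne i 0 with rfl | hi
        · simp [mul_comm]
        · simp [Function.update_of_ne hi, Pi.single_eq_of_ne hi]
      · rw [Submodule.span_le, Set.singleton_subset_iff]
        refine ⟨Pi.single 0 1, ?_⟩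
        rw [Matrix.mulVecLin_apply, Matrix.single_mulVec]
        ext i
        rcases eq_or_ne i 0 with rfl | hi
        · simp
        · simp [Function.update_of_ne hi, Pi.single_eq_of_ne hi]
    rw [Matrix.rank, hr, finrank_span_singleton]
    intro hz
    exact h0 (by have := congrFun hz 0; simpa using this)

private lemma card_final {F : Type} [Field F] [Fintype F] {t n k : ℕ} [NeZero n] :
    Nat.card (SZ F t n k (Finset.univ.erase 0) (Finset.univ.erase 0)) =
      Nat.card {x : Fin t → F // (Finset.univ.filter (fun i => x i ≠ 0)).card ≤ k} := by
  classical
  have hent : ∀ X ∈ SZ F t n k (Finset.univ.erase 0) (Finset.univ.erase 0),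
      ∀ (i : Fin t) (a b : Fin n), ¬(a = 0 ∧ b = 0) → X i a b = 0 := by
    intro X hX i a b hab
    apply hX.2
    rcases eq_or_ne a 0 with rfl | ha
    · exact Or.inr (Finset.mem_erase.mpr ⟨fun hb => hab ⟨rfl, hb⟩, Finset.mem_univ _⟩)
    · exact Or.inl (Finset.mem_erase.mpr ⟨ha, Finset.mem_univ _⟩)
  have hwt : ∀ X : Fin t → Matrix (Fin n) (Fin n) F,
      (∀ (i : Fin t) (a b : Fin n), ¬(a = 0 ∧ b = 0) → X i a b = 0) →
      sumRankW X = (Finset.univ.filter (fun i => X i 0 0 ≠ 0)).card := by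
    intro X hX
    rw [Finset.card_filter]
    refine Finset.sum_congr rfl (fun i _ => ?_)
    rw [rank_single_entry (X i) (hX i)]
    by_cases h : X i 0 0 = 0 <;> simp [h]
  apply Nat.card_congr
  refine
    { toFun := fun X => ⟨fun i => X.1 i 0 0, ?_⟩
      invFun := fun x => ⟨fun i => Matrix.single 0 0 (x.1 i), ?_, ?_⟩
      left_inv := ?_
      right_inv := ?_ }
  · calc (Finset.univ.filter (fun i => X.1 i 0 0 ≠ 0)).card
        = sumRankW X.1 := (hwt X.1 (hent X.1 X.2)).symm
      _ ≤ k := X.2.1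
  · show sumRankW _ ≤ k
    rw [hwt _ (fun i a b hab => Matrix.single_apply_of_ne 0 0 _ a b (by tauto))]
    calc (Finset.univ.filter (fun i => Matrix.single (0:Fin n) 0 (x.1 i) 0 0 ≠ 0)).card
        = (Finset.univ.filter (fun i => x.1 i ≠ 0)).card := by
          simp only [Matrix.single_apply_same]
      _ ≤ k := x.2
  · intro i a b hab
    rcases hab with ha | hb
    · exact Matrix.single_apply_of_ne 0 0 _ a b
        (by have := (Finset.mem_erase.mp ha).1; tauto)
    · exact Matrix.single_apply_of_ne 0 0 _ a b
        (by have := (Finset.mem_erase.mp hb).1; tauto)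
  · intro X
    apply Subtype.ext
    funext i
    exact (single_entry_rep (X.1 i) (hent X.1 X.2 i)).symm
  · intro x
    apply Subtype.ext
    funext i
    show Matrix.single (0:Fin n) 0 (x.1 i) 0 0 = x.1 i
    rw [Matrix.single_apply_same]

private lemma card_small (F : Type) [Field F] [Fintype F] (t k : ℕ) :
    Nat.card {x : Fin t → F // (Finset.univ.filter (fun i => x i ≠ 0)).card ≤ k} =
      ∑ w ∈ Finset.range (k+1), Nat.choose t w * (Fintype.card F - 1)^w := by
  classical
  rw [Nat.card_eq_fintype_card, Fintype.card_subtype]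
  have hmap : ∀ x ∈ Finset.univ.filter
      (fun x : Fin t → F => (Finset.univ.filter (fun i => x i ≠ 0)).card ≤ k),
      (Finset.univ.filter (fun i => x i ≠ 0)) ∈
        (Finset.univ : Finset (Finset (Fin t))).filter (fun s => s.card ≤ k) := by
    intro x hx
    simp only [Finset.mem_filter, Finset.mem_univ, true_and] at hx ⊢
    exact hx
  rw [Finset.card_eq_sum_card_fiberwise hmap]
  have hcount : ∀ s : Finset (Fin t),
      (Finset.univ.filter
        (fun x : Fin t → F => Finset.univ.filter (fun i => x i ≠ 0) = s)).card =
      (Fintype.card F - 1)^s.card := by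
    intro s
    rw [← Fintype.card_subtype]
    have hcond : ∀ x : Fin t → F,
        (Finset.univ.filter (fun i => x i ≠ 0) = s) ↔ (∀ i, x i ≠ 0 ↔ i ∈ s) := by
      intro x
      rw [Finset.ext_iff]
      apply forall_congr'
      intro i
      simp
    have e : {x : Fin t → F // Finset.univ.filter (fun i => x i ≠ 0) = s} ≃
        ((i : {i : Fin t // i ∈ s}) → {a : F // a ≠ 0}) :=
      (Equiv.subtypeEquivRight hcond).trans
      { toFun := fun x i => ⟨x.1 i.1, (x.2 i.1).mpr i.2⟩
        invFun := fun y => ⟨fun i => if h : i ∈ s then (y ⟨i, h⟩).1 else 0, fun i => by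
          by_cases h : i ∈ s
          · simp only [dif_pos h]
            exact ⟨fun _ => h, fun _ => (y ⟨i, h⟩).2⟩
          · simp only [dif_neg h]
            exact ⟨fun hz => absurd rfl hz, fun hs => absurd hs h⟩⟩
        left_inv := fun x => Subtype.ext (funext fun i => by
          by_cases h : i ∈ s
          · simp only [dif_pos h]
          · simp only [dif_neg h]
            by_contra hne
            exact h ((x.2 i).mp fun h0 => hne h0.symm))
        right_inv := fun y => funext fun i => Subtype.ext (by simp only [dif_pos i.2]) }
    rw [Fintype.card_congr e, Fintype.card_pi]
    have hcF : ∀ i : {i : Fin t // i ∈ s}, Fintype.card {a : F // a ≠ 0} = Fintype.card F - 1 := by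
      intro i
      rw [Fintype.card_subtype_compl, Fintype.card_subtype_eq (0 : F)]
    calc (∏ i : {i : Fin t // i ∈ s}, Fintype.card {a : F // a ≠ 0})
        = ∏ _i : {i : Fin t // i ∈ s}, (Fintype.card F - 1) :=
          Finset.prod_congr rfl (fun i _ => hcF i)
      _ = (Fintype.card F - 1) ^ s.card := by
          rw [Finset.prod_const, Finset.card_univ, Fintype.card_coe]
  have hstep1 : ∀ s ∈ (Finset.univ : Finset (Finset (Fin t))).filter (fun s => s.card ≤ k),
      ((Finset.univ.filter
        (fun x : Fin t → F => (Finset.univ.filter (fun i => x i ≠ 0)).card ≤ k)).filter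
        (fun x => Finset.univ.filter (fun i => x i ≠ 0) = s)).card
      = (Fintype.card F - 1)^s.card := by
    intro s hs
    simp only [Finset.mem_filter, Finset.mem_univ, true_and] at hs
    rw [Finset.filter_filter, ← hcount s]
    congr 1
    apply Finset.filter_congr
    intro x _
    constructor
    · exact fun h => h.2
    · exact fun h => ⟨h ▸ hs, h⟩
  rw [Finset.sum_congr rfl hstep1]
  -- regroup by cardinality
  have hmap2 : ∀ s ∈ (Finset.univ : Finset (Finset (Fin t))).filter (fun s => s.card ≤ k),
      s.card ∈ Finset.range (k+1) := by
    intro s hs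
    simp only [Finset.mem_filter, Finset.mem_univ, true_and] at hs
    simp only [Finset.mem_range]
    omega
  rw [← Finset.sum_fiberwise_of_maps_to hmap2 (fun s => (Fintype.card F - 1)^s.card)]
  apply Finset.sum_congr rfl
  intro w hw
  simp only [Finset.mem_range] at hw
  have hset : ((Finset.univ : Finset (Finset (Fin t))).filter (fun s => s.card ≤ k)).filter
      (fun s => s.card = w) = Finset.powersetCard w Finset.univ := by
    ext s
    simp only [Finset.mem_filter, Finset.mem_univ, true_and, Finset.mem_powersetCard_univ]
    constructor
    · exact fun h => h.2
    · intro h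
      exact ⟨by omega, h⟩
  rw [hset]
  calc (∑ s ∈ Finset.powersetCard w Finset.univ, (Fintype.card F - 1)^s.card)
      = ∑ _s ∈ Finset.powersetCard w (Finset.univ : Finset (Fin t)), (Fintype.card F - 1)^w := by
        apply Finset.sum_congr rfl
        intro s hs
        rw [Finset.mem_powersetCard_univ.mp hs]
    _ = Nat.choose t w * (Fintype.card F - 1)^w := by
        rw [Finset.sum_const, Finset.card_powersetCard, Finset.card_univ, Fintype.card_fin,
          smul_eq_mul]

private lemma rows_chain {F : Type} [Field F] [Fintype F] {t n k : ℕ} [NeZero n]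
    (C : Finset (Fin n)) (h0C : (0 : Fin n) ∉ C) :
    ∀ R : Finset (Fin n), (0 : Fin n) ∉ R →
      ((Nat.card (SZ F t n k ∅ C) : ℕ) : ZMod (Fintype.card F)) =
        ((Nat.card (SZ F t n k R C) : ℕ) : ZMod (Fintype.card F)) := by
  intro R
  induction R using Finset.induction_on with
  | empty => intro _; rfl
  | @insert j R hjR ih =>
    intro h0
    have hj : j ≠ 0 := fun h => h0 (h ▸ Finset.mem_insert_self j R)
    have h0R : (0 : Fin n) ∉ R := fun h => h0 (Finset.mem_insert_of_mem h)
    rw [ih h0R, row_step R C h0R j hj]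

private lemma cols_chain {F : Type} [Field F] [Fintype F] {t n k : ℕ} [NeZero n]
    (R : Finset (Fin n)) (h0R : (0 : Fin n) ∉ R) :
    ∀ C : Finset (Fin n), (0 : Fin n) ∉ C →
      ((Nat.card (SZ F t n k R ∅) : ℕ) : ZMod (Fintype.card F)) =
        ((Nat.card (SZ F t n k R C) : ℕ) : ZMod (Fintype.card F)) := by
  intro C
  induction C using Finset.induction_on with
  | empty => intro _; rfl
  | @insert j C hjC ih =>
    intro h0
    have hj : j ≠ 0 := fun h => h0 (h ▸ Finset.mem_insert_self j C)
    have h0C : (0 : Fin n) ∉ C := fun h => h0 (Finset.mem_insert_of_mem h)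
    rw [ih h0C, col_step R C h0C j hj]


theorem stmt_14 (F : Type) [Field F] [Fintype F] (q t n : ℕ)
    (hq : Fintype.card F = q) (ht : 1 ≤ t) (hn : 2 ≤ n) (k : ℕ) :
    ((ballVol F t n n k : ℕ) : ZMod q) =
      1 + ∑ i ∈ Finset.Icc 1 k, (-1 : ZMod q) ^ i * (Nat.choose t i : ZMod q) := by
  subst hq
  haveI : NeZero n := ⟨by omega⟩
  have h1 : ballVol F t n n k = Nat.card (SZ F t n k ∅ ∅) := by
    apply Nat.card_congr
    apply Equiv.subtypeEquivRight
    intro X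
    constructor
    · exact fun h => ⟨h, fun i a b hab => by simp at hab⟩
    · exact fun h => h.1
  have h2 := rows_chain (F := F) (t := t) (n := n) (k := k) (∅ : Finset (Fin n))
    (Finset.notMem_empty _) (Finset.univ.erase 0) (Finset.notMem_erase _ _)
  have h3 := cols_chain (F := F) (t := t) (n := n) (k := k) (Finset.univ.erase 0)
    (Finset.notMem_erase _ _) (Finset.univ.erase 0) (Finset.notMem_erase _ _)
  rw [h1, h2, h3, card_final, card_small]
  -- now arithmetic in ZMod (Fintype.card F)
  have hq1 : ((Fintype.card F - 1 : ℕ) : ZMod (Fintype.card F)) = -1 := by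
    have h2' : 1 ≤ Fintype.card F := Fintype.card_pos
    rw [Nat.cast_sub h2', ZMod.natCast_self, Nat.cast_one, zero_sub]
  rw [Nat.cast_sum]
  have hterm : ∀ w, ((Nat.choose t w * (Fintype.card F - 1)^w : ℕ) : ZMod (Fintype.card F)) =
      (-1 : ZMod (Fintype.card F))^w * (Nat.choose t w : ZMod (Fintype.card F)) := by
    intro w
    rw [Nat.cast_mul, Nat.cast_pow, hq1, mul_comm]
  rw [Finset.sum_congr rfl (fun w _ => hterm w)]
  have hins : Finset.range (k+1) = insert 0 (Finset.Icc 1 k) := by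
    ext a
    simp only [Finset.mem_range, Finset.mem_insert, Finset.mem_Icc]
    omega
  rw [hins, Finset.sum_insert (by simp)]
  simp
end

section
/- Let q be a prime power, t ≥ 1 and n ≥ 2 integers, and M = (𝔽_q^{n×n})^t. Suppose C is a perfect linear sum-rank code in M with minimum distance d ≥ 3, and set k = ⌊(d−1)/2⌋. If gcd(q, k!) = 1, then gcd(t, q) = 1. -/
open Matrix

namespace Stmt15

open Function MulAction Finset

open scoped Classical

variable {F : Type} [Field F] {n : ℕ} [NeZero n]

/-- Matrix supported on row `0`, with that row equal to `r`. -/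
def Rm (r : Fin n → F) : Matrix (Fin n) (Fin n) F :=
  vecMulVec (Pi.single 0 1) r

lemma Rm_apply (r : Fin n → F) (i j : Fin n) :
    Rm r i j = if i = 0 then r j else 0 := by
  rw [Rm, vecMulVec_apply, Pi.single_apply]
  by_cases h : i = 0 <;> simp [h]

lemma rank_Rm_le (r : Fin n → F) : (Rm r).rank ≤ 1 := by
  rw [Rm, vecMulVec_eq (Fin 1)]
  refine (Matrix.rank_mul_le_right _ _).trans ?_
  exact (Matrix.rank_le_card_height _).trans (by simp)

lemma rank_eq_zero_iff0 {X : Matrix (Fin n) (Fin n) F} : X.rank = 0 ↔ X = 0 := by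
  constructor
  · intro h
    rw [Matrix.rank, Submodule.finrank_eq_zero, LinearMap.range_eq_bot] at h
    ext i j
    have := congrFun (LinearMap.congr_fun h (Pi.single j 1)) i
    simpa [Matrix.mulVecLin_apply, Matrix.mulVec_single] using this
  · rintro rfl; exact Matrix.rank_zero

lemma Rm_eq_zero_iff {r : Fin n → F} : Rm r = 0 ↔ r = 0 := by
  constructor
  · intro h
    funext j
    have := congrFun (congrFun h 0) j
    simpa [Rm_apply] using this
  · rintro rfl
    ext i j
    simp [Rm_apply]

lemma rank_Rm (r : Fin n → F) : (Rm r).rank = if r = 0 then 0 else 1 := by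
  by_cases h : r = 0
  · simp [h, rank_eq_zero_iff0, Rm_eq_zero_iff]
  · simp only [h, if_false]
    refine le_antisymm (rank_Rm_le r) ?_
    rw [Nat.one_le_iff_ne_zero, Ne, rank_eq_zero_iff0, Rm_eq_zero_iff]
    exact h

/-- The unipotent-type matrix `1 + e₀ ⬝ (v with 0-th coordinate erased)ᵀ`. -/
def Am (v : Fin n → F) : Matrix (Fin n) (Fin n) F :=
  1 + vecMulVec (Pi.single 0 1) (Function.update v 0 0)

lemma vmul_Rm (a v d : Fin n → F) :
    vecMulVec a (Function.update v 0 0) * vecMulVec (Pi.single 0 1) d = 0 := by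
  ext i j
  rw [Matrix.mul_apply, Matrix.zero_apply]
  apply Finset.sum_eq_zero
  intro l _
  rcases eq_or_ne l 0 with hl | hl
  · simp [hl, vecMulVec_apply]
  · simp [vecMulVec_apply, Pi.single_eq_of_ne hl]

lemma Am_mul (v w : Fin n → F) : Am v * Am w = Am (v + w) := by
  have h1 : vecMulVec (Pi.single (0 : Fin n) (1:F)) (Function.update (v + w) 0 0)
      = vecMulVec (Pi.single (0 : Fin n) (1:F)) (Function.update v 0 0)
        + vecMulVec (Pi.single (0 : Fin n) (1:F)) (Function.update w 0 0) := by
    ext i j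
    by_cases h : j = 0 <;>
      simp [vecMulVec_apply, Function.update_apply, h, mul_add]
  unfold Am
  rw [add_mul, one_mul, mul_add, mul_one, vmul_Rm, add_zero, h1]
  abel

lemma Am_zero : Am (0 : Fin n → F) = 1 := by
  have h0 : Function.update (0 : Fin n → F) 0 0 = 0 := by
    funext i; simp [Function.update_apply]
  have h2 : vecMulVec (Pi.single (0 : Fin n) (1:F)) (0 : Fin n → F)
      = (0 : Matrix (Fin n) (Fin n) F) := by
    ext i j; simp [vecMulVec_apply]
  rw [Am, h0, h2, add_zero]

lemma isUnit_Am (v : Fin n → F) : IsUnit (Am v) := by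
  refine ⟨⟨Am v, Am (-v), ?_, ?_⟩, rfl⟩
  · rw [Am_mul]; simp [Am_zero]
  · rw [Am_mul]; simp [Am_zero]

lemma rank_Am_mul (v : Fin n → F) (X : Matrix (Fin n) (Fin n) F) :
    (Am v * X).rank = X.rank :=
  Matrix.rank_mul_eq_right_of_isUnit_det _ _
    ((Matrix.isUnit_iff_isUnit_det _).mp (isUnit_Am v))

lemma Am_mul_eq (v : Fin n → F) (X : Matrix (Fin n) (Fin n) F) :
    Am v * X = X + vecMulVec (Pi.single 0 1) (Function.update v 0 0) * X := by
  rw [Am, add_mul, one_mul]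

lemma fixed_iff (X : Matrix (Fin n) (Fin n) F) :
    (∀ v, Am v * X = X) ↔ X = Rm (X 0) := by
  constructor
  · intro h
    ext i j
    rw [Rm_apply]
    rcases eq_or_ne i 0 with hi | hi
    · simp [hi]
    · rw [if_neg hi]
      have h2 : vecMulVec (Pi.single (0 : Fin n) (1:F))
          (Function.update (Pi.single i (1:F)) 0 0) * X
          = (0 : Matrix (Fin n) (Fin n) F) := by
        have h3 := h (Pi.single i 1)
        rw [Am_mul_eq] at h3
        exact (add_eq_left).mp h3
      have h4 : Function.update (Pi.single i (1:F)) 0 0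
          = (Pi.single i (1:F) : Fin n → F) := by
        funext l
        rcases eq_or_ne l 0 with rfl | hl
        · simp [Function.update_apply, Pi.single_apply, Ne.symm hi]
        · simp [Function.update_apply, hl]
      rw [h4] at h2
      have h5 := congrFun (congrFun h2 0) j
      rw [Matrix.mul_apply, Matrix.zero_apply] at h5
      simpa [vecMulVec_apply, Pi.single_apply] using h5
  · intro h v
    rw [h, Am_mul_eq, Rm, vmul_Rm, add_zero]

lemma sumRankW_Rm [Fintype F] {t : ℕ} (f : Fin t → Fin n → F) :
    sumRankW (fun i => Rm (f i)) = (Finset.univ.filter fun i => f i ≠ 0).card := by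
  rw [sumRankW, Finset.card_filter]
  refine Finset.sum_congr rfl fun i _ => ?_
  rw [rank_Rm]
  by_cases h : f i = 0 <;> simp [h]


lemma ballVol_ne_one [Fintype F] {t k : ℕ} [NeZero t] (hk1 : 1 ≤ k) :
    ballVol F t n n k ≠ 1 := by
  rw [ballVol]
  intro hcard1
  obtain ⟨hsub, -⟩ := Nat.card_eq_one_iff_unique.mp hcard1
  have hr : (Pi.single (0 : Fin n) (1:F) : Fin n → F) ≠ 0 := by
    intro h
    have := congrFun h (0 : Fin n)
    simp at this
  have pf0 : sumRankW (0 : Fin t → Matrix (Fin n) (Fin n) F) ≤ k := by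
    simp [sumRankW]
  have pf1 : sumRankW ((Pi.single (0 : Fin t) (Rm (Pi.single (0 : Fin n) (1:F)))
      : Fin t → Matrix (Fin n) (Fin n) F)) ≤ k := by
    have h1 : ∀ i : Fin t,
        ((Pi.single (0 : Fin t) (Rm (Pi.single (0 : Fin n) (1:F)))
          : Fin t → Matrix (Fin n) (Fin n) F) i).rank
        = if i = 0 then (Rm (Pi.single (0 : Fin n) (1:F))).rank else 0 := by
      intro i
      rcases eq_or_ne i 0 with rfl | h
      · simp
      · simp [Pi.single_eq_of_ne h, h]
    rw [sumRankW, Finset.sum_congr rfl (fun i _ => h1 i), Finset.sum_ite_eq'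
      Finset.univ (0 : Fin t) (fun _ => (Rm (Pi.single (0 : Fin n) (1:F))).rank)]
    simp only [Finset.mem_univ, if_pos]
    exact le_trans (rank_Rm_le _) hk1
  have hx : (⟨0, pf0⟩ : {X : Fin t → Matrix (Fin n) (Fin n) F // sumRankW X ≤ k})
      = ⟨_, pf1⟩ := hsub.elim _ _
  have h2 : (0 : Matrix (Fin n) (Fin n) F) = Rm (Pi.single (0 : Fin n) (1:F)) := by
    simpa using congrFun (congrArg Subtype.val hx) 0
  exact hr (Rm_eq_zero_iff.mp h2.symm)

theorem key [Fintype F] (p : ℕ) [CharP F p] (hp : p.Prime) {t k : ℕ}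
    (hk1 : 1 ≤ k) (hkp : k < p)
    (hdvd : p ∣ Nat.card {X : Fin t → Matrix (Fin n) (Fin n) F // sumRankW X ≤ k})
    (hpt : p ∣ t) : False := by
  haveI : Fact p.Prime := ⟨hp⟩
  obtain ⟨s, rfl⟩ := hpt
  -- Action 1 : the "unipotent" group acts on the ball
  letI act1 : MulAction (Multiplicative (Fin n → F))
      {X : Fin (p*s) → Matrix (Fin n) (Fin n) F // sumRankW X ≤ k} :=
    { smul := fun g X => ⟨fun i => Am g.toAdd * X.1 i, by
        have h0 : sumRankW (fun i => Am g.toAdd * X.1 i) = sumRankW X.1 := by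
          rw [sumRankW, sumRankW]
          exact Finset.sum_congr rfl fun i _ => rank_Am_mul _ _
        rw [h0]; exact X.2⟩
      one_smul := fun X => Subtype.ext <| funext fun i => by
        show Am (Multiplicative.toAdd (1 : Multiplicative (Fin n → F))) * X.1 i = X.1 i
        rw [toAdd_one, Am_zero, one_mul]
      mul_smul := fun g h X => Subtype.ext <| funext fun i => by
        show Am (Multiplicative.toAdd (g * h)) * X.1 i
            = Am g.toAdd * (Am h.toAdd * X.1 i)
        rw [← mul_assoc, Am_mul, toAdd_mul] }
  have hpg1 : IsPGroup p (Multiplicative (Fin n → F)) := by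
    intro g
    refine ⟨1, ?_⟩
    rw [pow_one]
    apply Multiplicative.toAdd.injective
    rw [toAdd_pow, toAdd_one]
    funext i
    rw [Pi.smul_apply, nsmul_eq_mul, CharP.cast_eq_zero F p, zero_mul, Pi.zero_apply]
  have h1 := hpg1.card_modEq_card_fixedPoints
      {X : Fin (p*s) → Matrix (Fin n) (Fin n) F // sumRankW X ≤ k}
  -- identify the fixed points of action 1
  have hRm0 : ∀ r : Fin n → F, (Rm r : Matrix (Fin n) (Fin n) F) 0 = r := by
    intro r; funext j; rw [Rm_apply, if_pos rfl]
  have hfixmem : ∀ X : {X : Fin (p*s) → Matrix (Fin n) (Fin n) F // sumRankW X ≤ k},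
      X ∈ MulAction.fixedPoints (Multiplicative (Fin n → F)) _ ↔
        ∀ i, X.1 i = Rm (X.1 i 0) := by
    intro X
    rw [MulAction.mem_fixedPoints]
    constructor
    · intro hX i
      apply (fixed_iff _).mp
      intro v
      exact congrFun (congrArg Subtype.val (hX (Multiplicative.ofAdd v))) i
    · intro hX g
      apply Subtype.ext; funext i
      show Am g.toAdd * X.1 i = X.1 i
      exact (fixed_iff _).mpr (hX i) g.toAdd
  have e1 : (MulAction.fixedPoints (Multiplicative (Fin n → F))
        {X : Fin (p*s) → Matrix (Fin n) (Fin n) F // sumRankW X ≤ k})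
      ≃ {f : Fin (p*s) → Fin n → F //
          (Finset.univ.filter fun i => f i ≠ 0).card ≤ k} :=
    { toFun := fun Y => ⟨fun i => Y.1.1 i 0, by
        have hY := (hfixmem Y.1).mp Y.2
        have hw := Y.1.2
        rw [funext hY, sumRankW_Rm] at hw
        exact hw⟩
      invFun := fun f => ⟨⟨fun i => Rm (f.1 i), by rw [sumRankW_Rm]; exact f.2⟩,
        (hfixmem _).mpr fun i => by
          show Rm (f.1 i) = Rm ((Rm (f.1 i)) 0)
          rw [hRm0]⟩
      left_inv := fun Y => by
        apply Subtype.ext; apply Subtype.ext; funext i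
        show Rm ((Y.1.1 i) 0) = Y.1.1 i
        exact ((hfixmem Y.1).mp Y.2 i).symm
      right_inv := fun f => by
        apply Subtype.ext; funext i
        show (Rm (f.1 i)) 0 = f.1 i
        exact hRm0 (f.1 i) }
  have hcardT := Nat.card_congr e1
  -- Action 2 : cyclic shift of the components
  haveI : NeZero p := ⟨hp.pos.ne'⟩
  have ecard : Fintype.card (Fin (p*s)) = Fintype.card (ZMod p × Fin s) := by
    simp [ZMod.card]
  let e : Fin (p*s) ≃ ZMod p × Fin s := Fintype.equivOfCardEq ecard
  let σe : ZMod p → (Fin (p*s) ≃ Fin (p*s)) := fun c =>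
    e.trans ((Equiv.prodCongr (Equiv.addRight c) (Equiv.refl (Fin s))).trans e.symm)
  have hσe : ∀ c i, σe c i = e.symm ((e i).1 + c, (e i).2) := by
    intro c i
    simp [σe, Equiv.prodCongr_apply, Prod.map]
  have hcardfilter : ∀ (f : Fin (p*s) → Fin n → F) (c : ZMod p),
      (Finset.univ.filter fun i => f (σe c i) ≠ 0).card
        = (Finset.univ.filter fun i => f i ≠ 0).card := by
    intro f c
    apply Finset.card_bij (fun a _ => σe c a)
    · intro a ha
      rw [Finset.mem_filter]
      exact ⟨Finset.mem_univ _, (Finset.mem_filter.mp ha).2⟩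
    · intro a _ b _ hab
      exact (σe c).injective hab
    · intro b hb
      refine ⟨(σe c).symm b, ?_, by rw [Equiv.apply_symm_apply]⟩
      rw [Finset.mem_filter]
      refine ⟨Finset.mem_univ _, ?_⟩
      rw [Equiv.apply_symm_apply]
      exact (Finset.mem_filter.mp hb).2
  letI act2 : MulAction (Multiplicative (ZMod p))
      {f : Fin (p*s) → Fin n → F // (Finset.univ.filter fun i => f i ≠ 0).card ≤ k} :=
    { smul := fun c f => ⟨fun i => f.1 (σe c.toAdd i), by
        rw [hcardfilter]; exact f.2⟩
      one_smul := fun f => Subtype.ext <| funext fun i => by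
        show f.1 (σe (Multiplicative.toAdd (1 : Multiplicative (ZMod p))) i) = f.1 i
        rw [toAdd_one]
        congr 1
        rw [hσe, add_zero, Prod.mk.eta, Equiv.symm_apply_apply]
      mul_smul := fun c d f => Subtype.ext <| funext fun i => by
        show f.1 (σe (Multiplicative.toAdd (c * d)) i)
            = f.1 (σe d.toAdd (σe c.toAdd i))
        congr 1
        simp only [toAdd_mul, hσe, Equiv.apply_symm_apply]
        rw [← add_assoc] }
  have hpg2 : IsPGroup p (Multiplicative (ZMod p)) := by
    have hc : Nat.card (Multiplicative (ZMod p)) = p := by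
      rw [Nat.card_congr Multiplicative.toAdd, Nat.card_zmod]
    exact IsPGroup.of_card (n := 1) (by rw [hc, pow_one])
  have h2 := hpg2.card_modEq_card_fixedPoints
      {f : Fin (p*s) → Fin n → F // (Finset.univ.filter fun i => f i ≠ 0).card ≤ k}
  -- action 2 has a unique fixed point
  have honly : ∀ Y : MulAction.fixedPoints (Multiplicative (ZMod p))
      {f : Fin (p*s) → Fin n → F // (Finset.univ.filter fun i => f i ≠ 0).card ≤ k},
      Y.1.1 = 0 := by
    intro Y
    by_contra hne
    obtain ⟨i0, hi0⟩ := Function.ne_iff.mp hne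
    have hmem : ∀ c : ZMod p, σe c i0 ∈ Finset.univ.filter fun i => Y.1.1 i ≠ 0 := by
      intro c
      rw [Finset.mem_filter]
      refine ⟨Finset.mem_univ _, ?_⟩
      have h4 : Y.1.1 (σe c i0) = Y.1.1 i0 :=
        congrFun (congrArg Subtype.val
          ((MulAction.mem_fixedPoints.mp Y.2) (Multiplicative.ofAdd c))) i0
      rw [h4]; exact hi0
    have hinjc : Function.Injective fun c : ZMod p => σe c i0 := by
      intro a b hab
      simp only [hσe] at hab
      have h5 := congrArg e hab
      rw [Equiv.apply_symm_apply, Equiv.apply_symm_apply] at h5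
      have h6 := congrArg Prod.fst h5
      simpa using add_left_cancel h6
    have hple : p ≤ (Finset.univ.filter fun i => Y.1.1 i ≠ 0).card := by
      have h7 := Finset.card_le_card_of_injOn (s := (Finset.univ : Finset (ZMod p)))
        (fun c : ZMod p => σe c i0) (fun c _ => hmem c) hinjc.injOn
      simpa [ZMod.card] using h7
    have h8 := Y.1.2
    exact (not_lt.mpr (hple.trans h8)) hkp
  have hzmem : (⟨0, by simp⟩ :
      {f : Fin (p*s) → Fin n → F // (Finset.univ.filter fun i => f i ≠ 0).card ≤ k})
      ∈ MulAction.fixedPoints (Multiplicative (ZMod p))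
        {f : Fin (p*s) → Fin n → F // (Finset.univ.filter fun i => f i ≠ 0).card ≤ k} := by
    rw [MulAction.mem_fixedPoints]
    intro c
    apply Subtype.ext; funext i
    rfl
  have hone : Nat.card (MulAction.fixedPoints (Multiplicative (ZMod p))
      {f : Fin (p*s) → Fin n → F // (Finset.univ.filter fun i => f i ≠ 0).card ≤ k})
      = 1 := by
    rw [Nat.card_eq_one_iff_unique]
    refine ⟨⟨fun a b => ?_⟩, ⟨⟨⟨0, by simp⟩, hzmem⟩⟩⟩
    apply Subtype.ext; apply Subtype.ext
    rw [honly a, honly b]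
  -- conclude
  have hS1 : Nat.card {X : Fin (p*s) → Matrix (Fin n) (Fin n) F // sumRankW X ≤ k}
      ≡ 1 [MOD p] :=
    h1.trans (by rw [hcardT]; exact h2.trans (by rw [hone]))
  have hS0 : Nat.card {X : Fin (p*s) → Matrix (Fin n) (Fin n) F // sumRankW X ≤ k}
      ≡ 0 [MOD p] := Nat.modEq_zero_iff_dvd.mpr hdvd
  have h01 : (0:ℕ) ≡ 1 [MOD p] := hS0.symm.trans hS1
  have h9 : p ∣ 1 := (Nat.modEq_iff_dvd' (by norm_num)).mp h01
  exact hp.one_lt.ne' (Nat.dvd_one.mp h9)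

end Stmt15

theorem stmt_15 (F : Type) [Field F] [Fintype F] (q t n : ℕ)
    (hq : Fintype.card F = q) (ht : 1 ≤ t) (hn : 2 ≤ n)
    (C : Submodule F (Fin t → Matrix (Fin n) (Fin n) F)) (d : ℕ)
    (hmin : IsMinDist C d) (hperf : IsPerfect F C d) (hd : 3 ≤ d)
    (hgcd : Nat.gcd q (Nat.factorial ((d - 1) / 2)) = 1) :
    Nat.gcd t q = 1 := by
  haveI : NeZero n := ⟨by omega⟩
  haveI : NeZero t := ⟨by omega⟩
  haveI : CharP F (ringChar F) := ringChar.charP F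
  obtain ⟨e, hp, hcard⟩ := FiniteField.card F (ringChar F)
  set p := ringChar F with hpdef
  set k := (d - 1) / 2 with hkdef
  have hqpe : q = p ^ (e:ℕ) := by rw [← hq, hcard]
  have hk1 : 1 ≤ k := by omega
  have hpq : p ∣ q := by
    rw [hqpe]; exact dvd_pow_self p e.ne_zero
  have hkp : k < p := by
    by_contra hh
    push_neg at hh
    have h2 : p ∣ Nat.gcd q (Nat.factorial k) :=
      Nat.dvd_gcd hpq ((Nat.Prime.dvd_factorial hp).mpr hh)
    rw [hgcd] at h2
    have := Nat.le_of_dvd one_pos h2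
    have := hp.two_le
    omega
  rw [IsPerfect] at hperf
  have hMcard : Nat.card (Fin t → Matrix (Fin n) (Fin n) F)
      = p ^ ((e:ℕ) * Module.finrank F (Fin t → Matrix (Fin n) (Fin n) F)) := by
    rw [Nat.card_eq_fintype_card, Module.card_eq_pow_finrank (K := F), hcard, ← pow_mul]
  have hdvdpow : ballVol F t n n k
      ∣ p ^ ((e:ℕ) * Module.finrank F (Fin t → Matrix (Fin n) (Fin n) F)) := by
    rw [← hMcard, ← hperf]
    exact dvd_mul_left _ _
  obtain ⟨m, hm, hbv⟩ := (Nat.dvd_prime_pow hp).mp hdvdpow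
  have hne1 : ballVol F t n n k ≠ 1 := Stmt15.ballVol_ne_one hk1
  have hm0 : m ≠ 0 := by
    rintro rfl
    rw [pow_zero] at hbv
    exact hne1 hbv
  have hpbv : p ∣ ballVol F t n n k := by
    rw [hbv]; exact dvd_pow_self p hm0
  have hnpt : ¬ p ∣ t := by
    intro hpt
    exact Stmt15.key p hp hk1 hkp (by rw [ballVol] at hpbv; exact hpbv) hpt
  have hco : Nat.Coprime t q := by
    rw [hqpe]
    exact Nat.Coprime.pow_right _ ((Nat.Prime.coprime_iff_not_dvd hp).mpr hnpt).symm
  exact hco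
end

section
/- Let q be a prime power, t ≥ 1, n ≥ 2 and k ≥ 1 integers, and M = (𝔽_q^{n×n})^t. If gcd(q, k!) = 1 and gcd(t, q) ≠ 1, then there exists no perfect linear sum-rank code in M whose minimum distance d satisfies ⌊(d−1)/2⌋ = k. -/
open Matrix

private lemma matrix_rank_pos {F : Type} [Field F] {n m : ℕ}
    (A : Matrix (Fin m) (Fin n) F) (hA : A ≠ 0) : 0 < A.rank := by
  rw [Matrix.rank, Nat.pos_iff_ne_zero]
  intro h
  rw [Submodule.finrank_eq_zero, LinearMap.range_eq_bot] at h
  apply hA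
  ext i j
  have := congrFun (LinearMap.congr_fun h (Pi.single j 1)) i
  simpa [Matrix.mulVecLin_apply, Matrix.mulVec_single] using this

/-- sum-rank weight for `ZMod t`-indexed tuples -/
private noncomputable def wz {F : Type} [Field F] (t n : ℕ) [NeZero t]
    (Y : ZMod t → Matrix (Fin n) (Fin n) F) : ℕ := ∑ i, (Y i).rank

private def shiftf {F : Type} [Field F] {t n : ℕ} (c : ZMod t)
    (Y : ZMod t → Matrix (Fin n) (Fin n) F) : ZMod t → Matrix (Fin n) (Fin n) F :=
  fun i => Y (i + c)

private lemma wz_shiftf {F : Type} [Field F] {t n : ℕ} [NeZero t] (c : ZMod t)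
    (Y : ZMod t → Matrix (Fin n) (Fin n) F) : wz t n (shiftf c Y) = wz t n Y :=
  Fintype.sum_equiv (Equiv.addRight c) _ _ (fun _ => rfl)

private lemma ballVol_modEq_one (F : Type) [Field F] [Fintype F] (t n k p : ℕ)
    (hp : p.Prime) (hpt : p ∣ t) (ht : 1 ≤ t) (hk : k < p) :
    ballVol F t n n k ≡ 1 [MOD p] := by
  haveI : NeZero t := ⟨by omega⟩
  haveI : Fact p.Prime := ⟨hp⟩
  haveI : Fact (1 < p) := ⟨hp.one_lt⟩
  set s := t / p with hs_def
  have hps : p * s = t := Nat.mul_div_cancel' hpt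
  have hs1 : 1 ≤ s := by
    rcases Nat.eq_zero_or_pos s with h | h
    · rw [h, mul_zero] at hps; omega
    · exact h
  -- cast lemma
  have hmodc : ∀ m : ℕ, (((m % p) * s : ℕ) : ZMod t) = ((m * s : ℕ) : ZMod t) := by
    intro m
    have h1 : m * s = m % p * s + m / p * t := by
      conv_lhs => rw [← Nat.div_add_mod m p]
      rw [← hps]; ring
    rw [h1, Nat.cast_add, Nat.cast_mul (m / p) t, ZMod.natCast_self, mul_zero, add_zero]
  have hkey : ∀ x y : ZMod p,
      (((x + y).val * s : ℕ) : ZMod t)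
        = ((x.val * s : ℕ) : ZMod t) + ((y.val * s : ℕ) : ZMod t) := by
    intro x y
    rw [ZMod.val_add, hmodc, add_mul, Nat.cast_add]
  -- injectivity
  have hinj : ∀ m₁ m₂ : ℕ, m₁ < p → m₂ < p →
      ((m₁ * s : ℕ) : ZMod t) = ((m₂ * s : ℕ) : ZMod t) → m₁ = m₂ := by
    intro m₁ m₂ h₁ h₂ h
    rw [ZMod.natCast_eq_natCast_iff] at h
    have l₁ : m₁ * s < t := lt_of_lt_of_eq ((Nat.mul_lt_mul_right hs1).mpr h₁) hps
    have l₂ : m₂ * s < t := lt_of_lt_of_eq ((Nat.mul_lt_mul_right hs1).mpr h₂) hps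
    rw [Nat.ModEq, Nat.mod_eq_of_lt l₁, Nat.mod_eq_of_lt l₂] at h
    exact Nat.eq_of_mul_eq_mul_right hs1 h
  set Mat := Matrix (Fin n) (Fin n) F with hMat
  set G := Multiplicative (ZMod p) with hG
  set ball := {Y : ZMod t → Mat // wz t n Y ≤ k} with hball
  letI : MulAction G ball :=
    { smul := fun a Y => ⟨shiftf ((a.toAdd.val * s : ℕ) : ZMod t) Y.1,
        le_of_eq_of_le (wz_shiftf _ _) Y.2⟩
      one_smul := by
        intro Y
        apply Subtype.ext
        funext i
        show Y.1 (i + (((1 : G).toAdd.val * s : ℕ) : ZMod t)) = Y.1 i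
        simp
      mul_smul := by
        intro a b Y
        apply Subtype.ext
        funext i
        show Y.1 (i + (((a * b).toAdd.val * s : ℕ) : ZMod t))
          = Y.1 ((i + ((a.toAdd.val * s : ℕ) : ZMod t)) + ((b.toAdd.val * s : ℕ) : ZMod t))
        have hab : (a * b).toAdd = a.toAdd + b.toAdd := rfl
        rw [hab, hkey, add_assoc] }
  have hPG : IsPGroup p G := IsPGroup.of_card (n := 1) (by
    simp [hG, Nat.card_eq_fintype_card, ZMod.card])
  have hcong := hPG.card_modEq_card_fixedPoints ball
  -- the zero element
  have hw0 : wz t n (0 : ZMod t → Mat) ≤ k := by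
    simp [wz, Matrix.rank_zero]
  set z : ball := ⟨0, hw0⟩ with hz
  have hzfix : z ∈ MulAction.fixedPoints G ball := by
    intro a
    apply Subtype.ext
    funext i
    rfl
  -- uniqueness of the fixed point
  have huniq : ∀ Y : ball, Y ∈ MulAction.fixedPoints G ball → Y = z := by
    intro Y hY
    have hstep : ∀ i : ZMod t, Y.1 (i + ((s : ℕ) : ZMod t)) = Y.1 i := by
      intro i
      have h1 := hY (Multiplicative.ofAdd (1 : ZMod p))
      have h2 : Y.1 (i + ((((Multiplicative.ofAdd (1 : ZMod p)).toAdd.val * s : ℕ)) : ZMod t))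
          = Y.1 i := congrFun (congrArg Subtype.val h1) i
      simpa [ZMod.val_one] using h2
    have hclaim : ∀ (m : ℕ) (i : ZMod t), Y.1 (i + ((m * s : ℕ) : ZMod t)) = Y.1 i := by
      intro m
      induction m with
      | zero => intro i; simp
      | succ m ih =>
        intro i
        have hc : (((m + 1) * s : ℕ) : ZMod t)
            = ((s : ℕ) : ZMod t) + ((m * s : ℕ) : ZMod t) := by
          push_cast; ring
        rw [hc, ← add_assoc, ih, hstep]
    -- Y must be zero
    have hY0 : Y.1 = 0 := by
      by_contra h0
      obtain ⟨j, hj⟩ : ∃ j, Y.1 j ≠ 0 := by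
        by_contra hne
        push_neg at hne
        exact h0 (funext hne)
      set T : Finset (ZMod t) :=
        Finset.image (fun m : Fin p => j + ((m.1 * s : ℕ) : ZMod t)) Finset.univ with hT
      have hTcard : T.card = p := by
        rw [hT, Finset.card_image_of_injective _ ?_, Finset.card_univ, Fintype.card_fin]
        intro m₁ m₂ hm
        have := add_left_cancel hm
        exact Fin.ext (hinj m₁.1 m₂.1 m₁.2 m₂.2 this)
      have hle : p ≤ wz t n Y.1 := by
        calc p = ∑ _i ∈ T, 1 := by rw [Finset.sum_const, smul_eq_mul, mul_one, hTcard]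
          _ ≤ ∑ i ∈ T, (Y.1 i).rank := by
              apply Finset.sum_le_sum
              intro i hi
              rw [hT, Finset.mem_image] at hi
              obtain ⟨m, _, rfl⟩ := hi
              rw [hclaim]
              exact matrix_rank_pos _ hj
          _ ≤ ∑ i, (Y.1 i).rank :=
              Finset.sum_le_sum_of_subset (Finset.subset_univ T)
      have := Y.2
      omega
    exact Subtype.ext hY0
  have hfix1 : Nat.card (MulAction.fixedPoints G ball) = 1 := by
    rw [Nat.card_eq_one_iff_unique]
    constructor
    · constructor
      intro a b
      exact Subtype.ext ((huniq a.1 a.2).trans (huniq b.1 b.2).symm)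
    · exact ⟨⟨z, hzfix⟩⟩
  rw [hfix1] at hcong
  -- transport to `Fin t`
  have e0 : ZMod t ≃ Fin t := (Fintype.equivFin (ZMod t)).trans (finCongr (ZMod.card t))
  let Ψ : (ZMod t → Mat) ≃ (Fin t → Mat) := Equiv.arrowCongr e0 (Equiv.refl Mat)
  have hweight : ∀ Y : ZMod t → Mat, sumRankW (Ψ Y) = wz t n Y := by
    intro Y
    exact Fintype.sum_equiv e0.symm _ _ (fun x => by simp [Ψ, Equiv.arrowCongr])
  have hcard : ballVol F t n n k = Nat.card ball := by
    rw [ballVol]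
    apply Nat.card_congr
    exact (Equiv.subtypeEquiv Ψ (fun Y => by rw [hweight Y])).symm
  rw [hcard]
  exact hcong

theorem stmt_16 (F : Type) [Field F] [Fintype F] (q t n k : ℕ)
    (hq : Fintype.card F = q) (ht : 1 ≤ t) (hn : 2 ≤ n) (hk : 1 ≤ k)
    (hgcd : Nat.gcd q (Nat.factorial k) = 1) (htq : Nat.gcd t q ≠ 1) :
    ¬ ∃ (C : Submodule F (Fin t → Matrix (Fin n) (Fin n) F)) (d : ℕ),
        IsMinDist C d ∧ IsPerfect F C d ∧ (d - 1) / 2 = k := by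
  rintro ⟨C, d, hmin, hperf, hdk⟩
  -- the prime p
  set p := (Nat.gcd t q).minFac with hpdef
  have hp : p.Prime := Nat.minFac_prime htq
  have hpt : p ∣ t := (Nat.minFac_dvd _).trans (Nat.gcd_dvd_left t q)
  have hpq : p ∣ q := (Nat.minFac_dvd _).trans (Nat.gcd_dvd_right t q)
  -- p is the characteristic prime of F
  set p₀ := ringChar F with hp0def
  haveI : CharP F p₀ := ringChar.charP F
  obtain ⟨e, hp₀, hcard⟩ := FiniteField.card F p₀
  rw [hq] at hcard
  have hpp0 : p = p₀ := (Nat.prime_dvd_prime_iff_eq hp hp₀).mp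
    (hp.dvd_of_dvd_pow (hcard ▸ hpq))
  -- k < p
  have hkp : k < p := by
    by_contra hle
    push_neg at hle
    have h1 : p ∣ Nat.factorial k := Nat.dvd_factorial hp.pos hle
    have h2 : p ∣ 1 := hgcd ▸ Nat.dvd_gcd hpq h1
    exact hp.one_lt.ne' (Nat.dvd_one.mp h2)
  -- the congruence
  have hmod : ballVol F t n n k ≡ 1 [MOD p] :=
    ballVol_modEq_one F t n k p hp hpt ht hkp
  -- the ball volume divides a power of p
  have hMcard : Nat.card (Fin t → Matrix (Fin n) (Fin n) F) = q ^ (n * n * t) := by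
    rw [Nat.card_fun, Nat.card_congr (Matrix.of (m := Fin n) (n := Fin n) (α := F)).symm,
      Nat.card_fun, Nat.card_fun, Nat.card_eq_fintype_card (α := F), hq,
      Nat.card_eq_fintype_card, Nat.card_eq_fintype_card, Fintype.card_fin, Fintype.card_fin,
      ← pow_mul, ← pow_mul, mul_assoc]
  have hdvd : ballVol F t n n k ∣ p ^ (e * (n * n * t)) := by
    have := hperf
    rw [IsPerfect, hdk, hMcard, hcard, ← hpp0, ← pow_mul] at this
    exact Dvd.intro_left _ this
  obtain ⟨m, _, hVm⟩ := (Nat.dvd_prime_pow hp).mp hdvd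
  -- the ball has at least two elements
  have h2V : 2 ≤ ballVol F t n n k := by
    rw [ballVol]
    letI := Fintype.ofFinite {X : Fin t → Matrix (Fin n) (Fin n) F // sumRankW X ≤ k}
    rw [show (2 : ℕ) = 1 + 1 from rfl, Nat.add_one_le_iff, Nat.card_eq_fintype_card,
      Fintype.one_lt_card_iff_nontrivial]
    set A : Matrix (Fin n) (Fin n) F :=
      Matrix.diagonal (fun j : Fin n => if j = ⟨0, by omega⟩ then (1 : F) else 0) with hA
    have hArank : A.rank = 1 := by
      classical
      rw [hA, Matrix.rank_diagonal, Fintype.card_eq_one_iff]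
      refine ⟨⟨⟨0, by omega⟩, by simp⟩, ?_⟩
      rintro ⟨i, hi⟩
      rcases eq_or_ne i (⟨0, by omega⟩ : Fin n) with h | h
      · exact Subtype.ext h
      · rw [if_neg h] at hi; exact absurd rfl hi
    have hAne : A ≠ 0 := by
      intro h
      have := congrFun (congrFun h ⟨0, by omega⟩) ⟨0, by omega⟩
      simp [hA, Matrix.diagonal_apply_eq] at this
    have hX1w : sumRankW (Pi.single (⟨0, ht⟩ : Fin t) A) ≤ k := by
      rw [sumRankW, Finset.sum_eq_single (⟨0, ht⟩ : Fin t)]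
      · rw [Pi.single_eq_same, hArank]; exact hk
      · intro b _ hb
        rw [Pi.single_eq_of_ne hb, Matrix.rank_zero]
      · intro h; exact absurd (Finset.mem_univ _) h
    have hX0w : sumRankW (0 : Fin t → Matrix (Fin n) (Fin n) F) ≤ k := by
      simp [sumRankW, Matrix.rank_zero]
    refine ⟨⟨Pi.single (⟨0, ht⟩ : Fin t) A, hX1w⟩, ⟨0, hX0w⟩, ?_⟩
    intro h
    apply hAne
    have h2 := congrFun (congrArg Subtype.val h) (⟨0, ht⟩ : Fin t)
    simpa using h2
  -- contradiction
  have hm1 : 1 ≤ m := by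
    by_contra h
    push_neg at h
    interval_cases m
    · rw [pow_zero] at hVm; omega
  have hpd : p ∣ ballVol F t n n k := hVm ▸ dvd_pow_self p (by omega)
  have h0 : ballVol F t n n k % p = 0 := by
    obtain ⟨c, hc⟩ := hpd
    simp [hc, Nat.mul_mod_right]
  have h1 : 1 % p = 1 := Nat.mod_eq_of_lt hp.one_lt
  rw [Nat.ModEq, h0, h1] at hmod
  omega
end
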